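/- In the quantum Heisenberg algebra H = U_q^+(sl_3), with E3 = −E1E2 + q⁻¹E2E1 and E3' = −E2E1 + q⁻¹E1E2, the element Ω = E3·E3' is central in H. -/

import Mathlib

noncomputable section

open FreeAlgebra

/-- The quantum Serre relations of type A₂ defining `U_q⁺(sl₃)`. -/
inductive sl3Rel (q : ℂ) : FreeAlgebra ℂ (Fin 2) → FreeAlgebra ℂ (Fin 2) → Prop
  | serre1 : sl3Rel q
      (ι ℂ 0 * ι ℂ 0 * ι ℂ 1 - (q + q⁻¹) • (ι ℂ 0 * ι ℂ 1 * ι ℂ 0) + ι ℂ 1 * ι ℂ 0 * ι ℂ 0) 0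
  | serre2 : sl3Rel q
      (ι ℂ 1 * ι ℂ 1 * ι ℂ 0 - (q + q⁻¹) • (ι ℂ 1 * ι ℂ 0 * ι ℂ 1) + ι ℂ 0 * ι ℂ 1 * ι ℂ 1) 0

/-- `U_q⁺(sl₃)`, the quantum Heisenberg algebra. -/
abbrev Uqsl3 (q : ℂ) := RingQuot (sl3Rel q)

def E₁ (q : ℂ) : Uqsl3 q := RingQuot.mkAlgHom ℂ (sl3Rel q) (ι ℂ 0)
def E₂ (q : ℂ) : Uqsl3 q := RingQuot.mkAlgHom ℂ (sl3Rel q) (ι ℂ 1)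

/-- Abstract q-commutation: `A` q-commutes with `-(AB) + q⁻¹ BA` using the Serre relation. -/
lemma aux_qcomm1 {R : Type*} [Ring R] [Algebra ℂ R] (q : ℂ) (hq : q ≠ 0) (A B : R)
    (rel1 : A * A * B - (q + q⁻¹) • (A * B * A) + B * A * A = 0) :
    A * (-(A * B) + q⁻¹ • (B * A)) = q • ((-(A * B) + q⁻¹ • (B * A)) * A) := by
  have e1 : B * (A * A) = (q + q⁻¹) • (A * (B * A)) - A * (A * B) := by
    rw [← sub_eq_zero, ← rel1]; noncomm_ring
  simp only [mul_add, add_mul, mul_neg, neg_mul, mul_smul_comm, smul_mul_assoc, smul_add,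
    smul_neg, smul_smul, mul_assoc]
  rw [e1]
  match_scalars <;> field_simp <;> ring

/-- Abstract q-commutation: `-(BA) + q⁻¹ AB` q-commutes with `A` using the Serre relation. -/
lemma aux_qcomm2 {R : Type*} [Ring R] [Algebra ℂ R] (q : ℂ) (hq : q ≠ 0) (A B : R)
    (rel1 : A * A * B - (q + q⁻¹) • (A * B * A) + B * A * A = 0) :
    (-(B * A) + q⁻¹ • (A * B)) * A = q • (A * (-(B * A) + q⁻¹ • (A * B))) := by
  have e1 : B * (A * A) = (q + q⁻¹) • (A * (B * A)) - A * (A * B) := by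
    rw [← sub_eq_zero, ← rel1]; noncomm_ring
  simp only [mul_add, add_mul, mul_neg, neg_mul, mul_smul_comm, smul_mul_assoc, smul_add,
    smul_neg, smul_smul, mul_assoc]
  rw [e1]
  match_scalars <;> field_simp <;> ring

theorem stmt2 (q : ℂ) (hq : q ≠ 0) (hq' : ∀ n : ℕ, 0 < n → q ^ n ≠ 1)
    (E3 E3' Ω : Uqsl3 q)
    (hE3 : E3 = -(E₁ q * E₂ q) + q⁻¹ • (E₂ q * E₁ q))
    (hE3' : E3' = -(E₂ q * E₁ q) + q⁻¹ • (E₁ q * E₂ q))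
    (hΩ : Ω = E3 * E3') :
    ∀ x : Uqsl3 q, Ω * x = x * Ω := by
  set A := E₁ q with hA
  set B := E₂ q with hB
  -- the Serre relations in the quotient
  have rel1 : A * A * B - (q + q⁻¹) • (A * B * A) + B * A * A = 0 := by
    have := RingQuot.mkAlgHom_rel ℂ (sl3Rel.serre1 (q := q))
    simpa [hA, hB, E₁, E₂, map_add, map_sub, map_mul, map_smul] using this
  have rel2 : B * B * A - (q + q⁻¹) • (B * A * B) + A * B * B = 0 := by
    have := RingQuot.mkAlgHom_rel ℂ (sl3Rel.serre2 (q := q))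
    simpa [hA, hB, E₁, E₂, map_add, map_sub, map_mul, map_smul] using this
  have hq1 : q⁻¹ * q = 1 := inv_mul_cancel₀ hq
  -- q-commutation relations
  have k1 : A * E3 = q • (E3 * A) := by rw [hE3]; exact aux_qcomm1 q hq A B rel1
  have k2 : B * E3' = q • (E3' * B) := by rw [hE3']; exact aux_qcomm1 q hq B A rel2
  have k4 : E3' * A = q • (A * E3') := by rw [hE3']; exact aux_qcomm2 q hq A B rel1
  have k3 : E3 * B = q • (B * E3) := by rw [hE3]; exact aux_qcomm2 q hq B A rel2
  have hΩA : Ω * A = A * Ω := by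
    have hEA : E3 * A = q⁻¹ • (A * E3) := by rw [k1, smul_smul, hq1, one_smul]
    rw [hΩ, mul_assoc, k4, mul_smul_comm, ← mul_assoc, hEA, smul_mul_assoc, smul_smul,
      mul_inv_cancel₀ hq, one_smul, mul_assoc]
  have hΩB : Ω * B = B * Ω := by
    have hEB : E3' * B = q⁻¹ • (B * E3') := by rw [k2, smul_smul, hq1, one_smul]
    rw [hΩ, mul_assoc, hEB, mul_smul_comm, ← mul_assoc, k3, smul_mul_assoc, smul_smul,
      hq1, one_smul, mul_assoc]
  intro x
  obtain ⟨y, rfl⟩ := RingQuot.mkAlgHom_surjective ℂ (sl3Rel q) x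
  induction y using FreeAlgebra.induction with
  | grade0 r =>
      rw [AlgHom.commutes]
      exact (Algebra.commutes r Ω).symm
  | grade1 i =>
      fin_cases i
      · exact hΩA
      · exact hΩB
  | mul a b ha hb =>
      rw [map_mul, ← mul_assoc, ha, mul_assoc, hb, ← mul_assoc]
  | add a b ha hb =>
      rw [map_add, mul_add, add_mul, ha, hb]
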